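/- Let Γ be the fundamental group of a closed orientable surface of genus g > 1 and let p : Γ → ℤ^{2g} be the abelianization map. Then every multiplier σ on Γ is cohomologous to a multiplier of the form p*(σ'') for some multiplier σ'' on ℤ^{2g}. Moreover, if σ takes values in 𝒰(ℚ̄), then σ'' can be chosen with values in 𝒰(ℚ̄) such that σ and p*(σ'') are cohomologous via a map s : Γ → 𝒰(ℚ̄) (i.e. they are cohomologous within Z²(Γ, 𝒰(ℚ̄))). -/

import Mathlib

open scoped ComplexConjugate
open scoped commutatorElement

noncomputable section

/-- `l²(X)`, the Hilbert space of square-summable complex functions on `X`. -/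
abbrev l2 (X : Type*) : Type _ := lp (fun _ : X => ℂ) 2

/-- A (normalized) multiplier on a discrete group `G`: a `U(1)`-valued 2-cocycle. -/
def IsMultiplier {G : Type*} [Group G] (σ : G → G → ℂ) : Prop :=
  (∀ g h, ‖σ g h‖ = 1) ∧
  (∀ a b c, σ b c * σ a (b * c) = σ (a * b) c * σ a b) ∧
  (∀ g, σ 1 g = 1) ∧ (∀ g, σ g 1 = 1)

/-- `A` acts on `l²(G)^d` (realized as `l²(G × Fin d)`) as the matrix over the twisted
group algebra with coefficient matrices `a g` supported in the finite set `T`, i.e.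
`(Af)(x) = ∑_h a(xh⁻¹) σ(xh⁻¹,h) f(h) = ∑_{g∈T} a(g) σ(g,g⁻¹x) f(g⁻¹x)`. -/
def ActsAsTwisted {G : Type*} [Group G] (σ : G → G → ℂ) (d : ℕ) (T : Finset G)
    (a : G → Matrix (Fin d) (Fin d) ℂ)
    (A : l2 (G × Fin d) →L[ℂ] l2 (G × Fin d)) : Prop :=
  (∀ g, g ∉ T → a g = 0) ∧
  ∀ (f : l2 (G × Fin d)) (x : G) (i : Fin d),
    A f (x, i) = ∑ g ∈ T, ∑ j, a g i j * σ g (g⁻¹ * x) * f (g⁻¹ * x, j)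

/-- `lam` is an eigenvalue of the bounded operator `A` on `l²(X)`. -/
def HasL2Eigenvalue {X : Type*} (A : l2 X →L[ℂ] l2 X) (lam : ℂ) : Prop :=
  ∃ f : l2 X, f ≠ 0 ∧ A f = lam • f

/-- The `σ`-multiplier algebraic eigenvalue property: every matrix over the twisted group
algebra `ℚ̄(G,σ)` acting on `l²(G)^d` has only algebraic eigenvalues. -/
def HasMAEP (G : Type*) [Group G] (σ : G → G → ℂ) : Prop :=
  ∀ (d : ℕ) (T : Finset G) (a : G → Matrix (Fin d) (Fin d) ℂ),
    (∀ g i j, IsAlgebraic ℚ (a g i j)) →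
    ∀ A : l2 (G × Fin d) →L[ℂ] l2 (G × Fin d), ActsAsTwisted σ d T a A →
    ∀ lam : ℂ, HasL2Eigenvalue A lam → IsAlgebraic ℚ lam

/-- The (untwisted) algebraic eigenvalue property. -/
def HasAEP (G : Type*) [Group G] : Prop := HasMAEP G fun _ _ => 1

/-- The surface relator `[a₁,b₁]⋯[a_g,b_g]` in the free group on `2g` generators. -/
def surfaceRel (g : ℕ) : FreeGroup (Fin (2 * g)) :=
  (List.ofFn fun i : Fin g =>
    ⁅FreeGroup.of (⟨2 * i.1, by have := i.2; omega⟩ : Fin (2 * g)),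
     FreeGroup.of (⟨2 * i.1 + 1, by have := i.2; omega⟩ : Fin (2 * g))⁆).prod

/-- The fundamental group of the closed orientable surface of genus `g`:
`⟨a₁,b₁,…,a_g,b_g ∣ [a₁,b₁]⋯[a_g,b_g]⟩`. -/
abbrev SurfaceGroup (g : ℕ) : Type :=
  PresentedGroup ({surfaceRel g} : Set (FreeGroup (Fin (2 * g))))


section ExtDev

variable {G : Type*} [Group G]

theorem mult_ne_zero {σ : G → G → ℂ} (hσ : IsMultiplier σ) (x y : G) : σ x y ≠ 0 := by
  intro h
  have h1 := hσ.1 x y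
  rw [h] at h1
  simp at h1

/-- The central extension of `G` by `ℂˣ` determined by the multiplier `σ`. -/
def CExt (σ : G → G → ℂ) (_hσ : IsMultiplier σ) : Type _ := ℂˣ × G

variable {σ : G → G → ℂ} {hσ : IsMultiplier σ}

def CExt.mk (u : ℂˣ) (x : G) : CExt σ hσ := (u, x)

def CExt.fst (a : CExt σ hσ) : ℂˣ := (show ℂˣ × G from a).1
def CExt.snd (a : CExt σ hσ) : G := (show ℂˣ × G from a).2

theorem CExt.ext {a b : CExt σ hσ} (h1 : a.fst = b.fst) (h2 : a.snd = b.snd) : a = b :=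
  Prod.ext h1 h2

instance : Mul (CExt σ hσ) :=
  ⟨fun a b => CExt.mk (a.fst * b.fst * Units.mk0 (σ a.snd b.snd) (mult_ne_zero hσ _ _))
    (a.snd * b.snd)⟩

instance : One (CExt σ hσ) := ⟨CExt.mk 1 1⟩

instance : Inv (CExt σ hσ) :=
  ⟨fun a => CExt.mk (a.fst * Units.mk0 (σ a.snd⁻¹ a.snd) (mult_ne_zero hσ _ _))⁻¹ a.snd⁻¹⟩

@[simp] theorem CExt.fst_mk (u : ℂˣ) (x : G) : (CExt.mk u x : CExt σ hσ).fst = u := rfl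
@[simp] theorem CExt.snd_mk (u : ℂˣ) (x : G) : (CExt.mk u x : CExt σ hσ).snd = x := rfl
@[simp] theorem CExt.fst_mul (a b : CExt σ hσ) :
    (a * b).fst = a.fst * b.fst * Units.mk0 (σ a.snd b.snd) (mult_ne_zero hσ _ _) := rfl
@[simp] theorem CExt.snd_mul (a b : CExt σ hσ) : (a * b).snd = a.snd * b.snd := rfl
@[simp] theorem CExt.fst_one : (1 : CExt σ hσ).fst = 1 := rfl
@[simp] theorem CExt.snd_one : (1 : CExt σ hσ).snd = 1 := rfl
@[simp] theorem CExt.fst_inv (a : CExt σ hσ) :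
    a⁻¹.fst = (a.fst * Units.mk0 (σ a.snd⁻¹ a.snd) (mult_ne_zero hσ _ _))⁻¹ := rfl
@[simp] theorem CExt.snd_inv (a : CExt σ hσ) : a⁻¹.snd = a.snd⁻¹ := rfl

instance : Group (CExt σ hσ) where
  mul := (· * ·)
  one := 1
  inv := Inv.inv
  div a b := a * b⁻¹
  div_eq_mul_inv _ _ := rfl
  mul_assoc a b c := by
    refine CExt.ext ?_ (mul_assoc _ _ _)
    simp only [CExt.fst_mul, CExt.snd_mul]
    apply Units.ext
    push_cast [Units.val_mk0]
    linear_combination (-((a.fst : ℂ) * b.fst * c.fst)) * hσ.2.1 a.snd b.snd c.snd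
  one_mul a := by
    refine CExt.ext ?_ (one_mul _)
    apply Units.ext
    simp [hσ.2.2.1]
  mul_one a := by
    refine CExt.ext ?_ (mul_one _)
    apply Units.ext
    simp [hσ.2.2.2]
  inv_mul_cancel a := by
    refine CExt.ext ?_ (inv_mul_cancel _)
    apply Units.ext
    simp only [CExt.fst_mul, CExt.fst_inv, CExt.snd_inv, CExt.fst_one, Units.val_mul,
      Units.val_inv_eq_inv_val, Units.val_mk0, Units.val_one]
    have hne : (a.fst : ℂ) * σ a.snd⁻¹ a.snd ≠ 0 :=
      mul_ne_zero (Units.ne_zero _) (mult_ne_zero hσ _ _)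
    rw [mul_assoc]
    exact inv_mul_cancel₀ hne

def sndHom : CExt σ hσ →* G where
  toFun := CExt.snd
  map_one' := rfl
  map_mul' _ _ := rfl

end ExtDev
section SectDev

variable {G : Type*} [Group G] {ι : Type*}

theorem FreeGroup.pure_eq_of {α : Type*} (x : α) : (pure x : FreeGroup α) = FreeGroup.of x := rfl

/-- The tautological lift of generators into the extension. -/
def sect {σ : G → G → ℂ} (hσ : IsMultiplier σ) (f : ι → G) : FreeGroup ι →* CExt σ hσ :=
  FreeGroup.lift fun i => CExt.mk 1 (f i)

theorem snd_sect {σ : G → G → ℂ} (hσ : IsMultiplier σ) (f : ι → G) (w : FreeGroup ι) :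
    (sect hσ f w).snd = FreeGroup.lift f w := by
  have h : (sndHom : CExt σ hσ →* G).comp (sect hσ f) = FreeGroup.lift f := by
    apply FreeGroup.ext_hom
    intro a
    simp [sect, sndHom, FreeGroup.lift_apply_of]
    rfl
  exact DFunLike.congr_fun h w

theorem abs_fst_sect {σ : G → G → ℂ} (hσ : IsMultiplier σ) (f : ι → G) (w : FreeGroup ι) :
    ‖((sect hσ f w).fst : ℂ)‖ = 1 := by
  refine FreeGroup.induction_on w ?_ ?_ ?_ ?_
  · simp
  · intro x
    simp [sect, FreeGroup.pure_eq_of, FreeGroup.lift_apply_of]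
  · intro x ih
    rw [map_inv, CExt.fst_inv]
    simp [Units.val_inv_eq_inv_val, map_inv₀, map_mul, hσ.1, ih]
  · intro u v ihu ihv
    rw [map_mul, CExt.fst_mul]
    simp [map_mul, hσ.1, ihu, ihv]

theorem alg_mul {x y : ℂ} (hx : IsAlgebraic ℚ x) (hy : IsAlgebraic ℚ y) :
    IsAlgebraic ℚ (x * y) := by
  rw [isAlgebraic_iff_isIntegral] at hx hy ⊢
  exact hx.mul hy

theorem alg_conj {x : ℂ} (h : IsAlgebraic ℚ x) : IsAlgebraic ℚ (conj x) :=
  h.algHom (starRingEnd ℂ).toRatAlgHom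

theorem alg_inv {x : ℂ} (h : IsAlgebraic ℚ x) : IsAlgebraic ℚ x⁻¹ := h.inv

theorem alg_zpow {x : ℂ} (h : IsAlgebraic ℚ x) (n : ℤ) : IsAlgebraic ℚ (x ^ n) := by
  have hpow : ∀ m : ℕ, IsAlgebraic ℚ (x ^ m) := by
    intro m
    rw [isAlgebraic_iff_isIntegral] at h ⊢
    exact h.pow m
  obtain ⟨m, rfl | rfl⟩ := n.eq_nat_or_neg
  · rw [zpow_natCast]
    exact hpow m
  · rw [zpow_neg, zpow_natCast]
    exact (hpow m).inv

theorem alg_fst_sect {σ : G → G → ℂ} (hσ : IsMultiplier σ)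
    (halg : ∀ x y, IsAlgebraic ℚ (σ x y)) (f : ι → G) (w : FreeGroup ι) :
    IsAlgebraic ℚ ((sect hσ f w).fst : ℂ) := by
  refine FreeGroup.induction_on w ?_ ?_ ?_ ?_
  · simpa using isAlgebraic_one (R := ℚ) (A := ℂ)
  · intro x
    simpa [sect, FreeGroup.pure_eq_of, FreeGroup.lift_apply_of] using isAlgebraic_one (R := ℚ) (A := ℂ)
  · intro x ih
    rw [map_inv, CExt.fst_inv]
    rw [Units.val_inv_eq_inv_val, Units.val_mul, Units.val_mk0]
    exact (alg_mul ih (halg _ _)).inv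
  · intro u v ihu ihv
    rw [map_mul, CExt.fst_mul, Units.val_mul, Units.val_mul, Units.val_mk0]
    exact alg_mul (alg_mul ihu ihv) (halg _ _)

theorem fst_sect_mul_conj {σ β τ : G → G → ℂ} (hσ : IsMultiplier σ) (hβ : IsMultiplier β)
    (hτ : IsMultiplier τ) (hdef : ∀ x y, τ x y = σ x y * conj (β x y))
    (f : ι → G) (w : FreeGroup ι) :
    ((sect hτ f w).fst : ℂ) = ((sect hσ f w).fst : ℂ) * conj ((sect hβ f w).fst : ℂ) := by
  refine FreeGroup.induction_on w ?_ ?_ ?_ ?_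
  · simp
  · intro x
    simp [sect, FreeGroup.pure_eq_of, FreeGroup.lift_apply_of]
  · intro x ih
    rw [map_inv, map_inv, map_inv, CExt.fst_inv, CExt.fst_inv, CExt.fst_inv]
    simp only [Units.val_inv_eq_inv_val, Units.val_mul, Units.val_mk0, snd_sect, map_inv]
    simp only [ih, hdef, map_mul, map_inv₀, mul_inv]
    ring
  · intro u v ihu ihv
    rw [map_mul, map_mul, map_mul, CExt.fst_mul, CExt.fst_mul, CExt.fst_mul]
    simp only [Units.val_mul, Units.val_mk0, snd_sect]
    rw [ihu, ihv, hdef, map_mul, map_mul]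
    ring

end SectDev
section MultDev

variable {G : Type*} [Group G]

theorem conj_mul_eq_one {z : ℂ} (h : ‖z‖ = 1) : conj z * z = 1 := by
  have hz : z ≠ 0 := by intro h0; rw [h0] at h; simp at h
  rw [← Complex.inv_eq_conj (by exact h), inv_mul_cancel₀ hz]

theorem abs_zpow_one {z : ℂ} (h : ‖z‖ = 1) (n : ℤ) : ‖z ^ n‖ = 1 := by
  obtain ⟨m, rfl | rfl⟩ := n.eq_nat_or_neg
  · rw [zpow_natCast, norm_pow, h, one_pow]
  · rw [zpow_neg, zpow_natCast, norm_inv, norm_pow, h, one_pow, inv_one]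

theorem bichar_mult {lam : ℂ} (hne : lam ≠ 0) (habs : ‖lam‖ = 1)
    (M0 M1 : G →* Multiplicative ℤ) :
    IsMultiplier (fun x y =>
      lam ^ (Multiplicative.toAdd (M0 x) * Multiplicative.toAdd (M1 y))) := by
  refine ⟨fun x y => abs_zpow_one habs _, ?_, ?_, ?_⟩
  · intro a b c
    rw [← zpow_add₀ hne, ← zpow_add₀ hne]
    congr 1
    simp only [map_mul, toAdd_mul]
    ring
  · intro x
    simp
  · intro x
    simp

theorem mult_mul_conj {σ β : G → G → ℂ} (hσ : IsMultiplier σ) (hβ : IsMultiplier β) :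
    IsMultiplier (fun x y => σ x y * conj (β x y)) := by
  refine ⟨?_, ?_, ?_, ?_⟩
  · intro x y
    simp [map_mul, Complex.norm_conj, hσ.1, hβ.1]
  · intro a b c
    have h1 := hσ.2.1 a b c
    have h2 := congrArg conj (hβ.2.1 a b c)
    simp only [map_mul] at h2
    linear_combination (conj (β b c) * conj (β a (b * c))) * h1 + (σ (a * b) c * σ a b) * h2
  · intro x
    simp [hσ.2.2.1, hβ.2.2.1]
  · intro x
    simp [hσ.2.2.2, hβ.2.2.2]

theorem sect_of {σ : G → G → ℂ} (hσ : IsMultiplier σ) {ι : Type*} (f : ι → G) (i : ι) :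
    sect hσ f (FreeGroup.of i) = CExt.mk 1 (f i) :=
  FreeGroup.lift_apply_of

theorem snd_comm {σ : G → G → ℂ} {hσ : IsMultiplier σ} (a b : G) :
    (⁅(CExt.mk 1 a : CExt σ hσ), (CExt.mk 1 b : CExt σ hσ)⁆).snd = ⁅a, b⁆ := by
  have h := map_commutatorElement (sndHom : CExt σ hσ →* G) (CExt.mk 1 a) (CExt.mk 1 b)
  exact h

theorem fst_list_prod_of_triv {σ : G → G → ℂ} {hσ : IsMultiplier σ}
    (L : List (CExt σ hσ)) (h : ∀ a ∈ L, ∀ y, σ a.snd y = 1) :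
    ((L.prod).fst : ℂ) = (L.map (fun a => (a.fst : ℂ))).prod := by
  induction L with
  | nil => simp
  | cons a L ih =>
    simp only [List.prod_cons, List.map_cons, CExt.fst_mul, Units.val_mul, Units.val_mk0]
    rw [h a List.mem_cons_self _, ih (fun x hx => h x (List.mem_cons_of_mem _ hx))]
    ring

theorem fst_comm_bichar {lam : ℂ} (hne : lam ≠ 0) {β : G → G → ℂ}
    (M0 M1 : G →* Multiplicative ℤ)
    (hβdef : ∀ x y, β x y =
      lam ^ (Multiplicative.toAdd (M0 x) * Multiplicative.toAdd (M1 y)))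
    (hβ : IsMultiplier β) (a b : G) :
    ((⁅(CExt.mk 1 a : CExt β hβ), (CExt.mk 1 b : CExt β hβ)⁆).fst : ℂ)
      = lam ^ (Multiplicative.toAdd (M0 a) * Multiplicative.toAdd (M1 b)
          - Multiplicative.toAdd (M0 b) * Multiplicative.toAdd (M1 a)) := by
  rw [commutatorElement_def]
  simp only [CExt.fst_mul, CExt.fst_inv, CExt.snd_mul, CExt.snd_inv, CExt.fst_mk, CExt.snd_mk,
    Units.val_mul, Units.val_inv_eq_inv_val, Units.val_mk0, Units.val_one]
  simp only [hβdef, map_mul, map_inv, toAdd_mul, toAdd_inv, mul_inv]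
  simp only [← zpow_neg]
  simp only [one_mul, inv_one]
  rw [← zpow_add₀ hne, ← zpow_add₀ hne, ← zpow_add₀ hne, ← zpow_add₀ hne]
  congr 1
  ring

end MultDev
section SurfaceDev

variable (g : ℕ)

def chiF (k : Fin (2 * g)) : Fin (2 * g) → Multiplicative ℤ := fun i =>
  Multiplicative.ofAdd (if i = k then 1 else 0)

theorem chiF_rel (k : Fin (2 * g)) :
    ∀ r ∈ ({surfaceRel g} : Set (FreeGroup (Fin (2 * g)))),
      FreeGroup.lift (chiF g k) r = 1 := by
  intro r hr
  rw [Set.mem_singleton_iff] at hr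
  subst hr
  rw [surfaceRel, map_list_prod, List.map_ofFn]
  apply List.prod_eq_one
  intro x hx
  rw [List.mem_ofFn] at hx
  obtain ⟨i, rfl⟩ := hx
  simp only [Function.comp_apply]
  rw [map_commutatorElement]
  exact commutatorElement_eq_one_iff_commute.mpr (Commute.all _ _)

def chi (k : Fin (2 * g)) : SurfaceGroup g →* Multiplicative ℤ :=
  PresentedGroup.toGroup (chiF_rel g k)

theorem chi_of (k i : Fin (2 * g)) : chi g k (PresentedGroup.of i) = chiF g k i :=
  PresentedGroup.toGroup.of _

theorem lift_of_eq_mk :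
    FreeGroup.lift (PresentedGroup.of : Fin (2 * g) → SurfaceGroup g)
      = PresentedGroup.mk {surfaceRel g} := by
  apply FreeGroup.ext_hom
  intro a
  rw [FreeGroup.lift_apply_of]
  rfl

theorem mk_surfaceRel : PresentedGroup.mk {surfaceRel g} (surfaceRel g) = 1 :=
  (QuotientGroup.eq_one_iff _).mpr
    (Subgroup.subset_normalClosure (Set.mem_singleton _))

end SurfaceDev

theorem surface_multiplier_pullback (g : ℕ) (hg : 1 < g)
    (σ : SurfaceGroup g → SurfaceGroup g → ℂ) (hσ : IsMultiplier σ) :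
    (∃ (σ'' : Abelianization (SurfaceGroup g) → Abelianization (SurfaceGroup g) → ℂ)
        (s : SurfaceGroup g → ℂ),
      IsMultiplier σ'' ∧ (∀ x, ‖s x‖ = 1) ∧
      ∀ x y, σ x y = s x * s y * conj (s (x * y)) *
        σ'' (Abelianization.of x) (Abelianization.of y)) ∧
    ((∀ x y, IsAlgebraic ℚ (σ x y)) →
      ∃ (σ'' : Abelianization (SurfaceGroup g) → Abelianization (SurfaceGroup g) → ℂ)
          (s : SurfaceGroup g → ℂ),
        IsMultiplier σ'' ∧ (∀ q q', IsAlgebraic ℚ (σ'' q q')) ∧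
        (∀ x, ‖s x‖ = 1 ∧ IsAlgebraic ℚ (s x)) ∧
        ∀ x y, σ x y = s x * s y * conj (s (x * y)) *
          σ'' (Abelianization.of x) (Abelianization.of y)) := by
  classical
  have h2g0 : (0 : ℕ) < 2 * g := by omega
  have h2g1 : (1 : ℕ) < 2 * g := by omega
  have hg0 : (0 : ℕ) < g := by omega
  set P : Fin (2 * g) → SurfaceGroup g := PresentedGroup.of with hP
  set lam : ℂ := ((sect hσ P (surfaceRel g)).fst : ℂ) with hlam
  have hlam_abs : ‖lam‖ = 1 := abs_fst_sect hσ P (surfaceRel g)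
  have hlam_ne : lam ≠ 0 := fun h => by rw [h] at hlam_abs; simp at hlam_abs
  set M0 : SurfaceGroup g →* Multiplicative ℤ := chi g ⟨0, h2g0⟩ with hM0
  set M1 : SurfaceGroup g →* Multiplicative ℤ := chi g ⟨1, h2g1⟩ with hM1
  set A0 := Abelianization.lift M0 with hA0
  set A1 := Abelianization.lift M1 with hA1
  set σ'' : Abelianization (SurfaceGroup g) → Abelianization (SurfaceGroup g) → ℂ :=
    fun q q' => lam ^ (Multiplicative.toAdd (A0 q) * Multiplicative.toAdd (A1 q')) with hσ''eq
  have hσ''ap : ∀ q q', σ'' q q'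
      = lam ^ (Multiplicative.toAdd (A0 q) * Multiplicative.toAdd (A1 q')) := by
    intro q q'; rw [hσ''eq]
  have hσ''_mult : IsMultiplier σ'' := by
    rw [hσ''eq]; exact bichar_mult hlam_ne hlam_abs A0 A1
  set β : SurfaceGroup g → SurfaceGroup g → ℂ :=
    fun x y => σ'' (Abelianization.of x) (Abelianization.of y) with hβeq
  have hβap : ∀ x y, σ'' (Abelianization.of x) (Abelianization.of y) = β x y := by
    intro x y; rw [hβeq]
  have hβdef : ∀ x y, β x y
      = lam ^ (Multiplicative.toAdd (M0 x) * Multiplicative.toAdd (M1 y)) := by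
    intro x y
    rw [hβeq]
    simp only [hσ''ap, hA0, hA1, Abelianization.lift_apply_of]
  have hβ_mult : IsMultiplier β := by
    have h := bichar_mult (G := SurfaceGroup g) hlam_ne hlam_abs M0 M1
    have he : β = fun x y =>
        lam ^ (Multiplicative.toAdd (M0 x) * Multiplicative.toAdd (M1 y)) := by
      funext x y; exact hβdef x y
    rw [he]; exact h
  set τ : SurfaceGroup g → SurfaceGroup g → ℂ := fun x y => σ x y * conj (β x y) with hτeq
  have hτap : ∀ x y, τ x y = σ x y * conj (β x y) := by intro x y; rw [hτeq]
  have hτ : IsMultiplier τ := by rw [hτeq]; exact mult_mul_conj hσ hβ_mult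
  -- the cocycle invariant of the pulled-back bicharacter is `lam`
  have hβr : ((sect hβ_mult P (surfaceRel g)).fst : ℂ) = lam := by
    have hmap : sect hβ_mult P (surfaceRel g) =
        (List.ofFn fun i : Fin g =>
          ⁅(CExt.mk 1 (P ⟨2 * i.1, by have := i.2; omega⟩) : CExt β hβ_mult),
           (CExt.mk 1 (P ⟨2 * i.1 + 1, by have := i.2; omega⟩) : CExt β hβ_mult)⁆).prod := by
      show sect hβ_mult P (List.ofFn fun i : Fin g =>
        ⁅FreeGroup.of (⟨2 * i.1, by have := i.2; omega⟩ : Fin (2 * g)),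
         FreeGroup.of (⟨2 * i.1 + 1, by have := i.2; omega⟩ : Fin (2 * g))⁆).prod = _
      rw [map_list_prod, List.map_ofFn]
      refine congrArg List.prod (congrArg List.ofFn ?_)
      funext i
      simp only [Function.comp_apply]
      rw [map_commutatorElement, sect_of, sect_of]
    rw [hmap]
    rw [fst_list_prod_of_triv]
    · rw [List.map_ofFn, List.prod_ofFn]
      simp only [Function.comp_apply]
      have hval : ∀ i : Fin g,
          (((⁅(CExt.mk 1 (P ⟨2 * i.1, by have := i.2; omega⟩) : CExt β hβ_mult),
             (CExt.mk 1 (P ⟨2 * i.1 + 1, by have := i.2; omega⟩) : CExt β hβ_mult)⁆).fst : ℂˣ) : ℂ)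
            = if i = (⟨0, hg0⟩ : Fin g) then lam else 1 := by
        intro i
        rw [fst_comm_bichar hlam_ne M0 M1 hβdef hβ_mult]
        rw [hM0, hM1, hP, chi_of, chi_of, chi_of, chi_of]
        simp only [chiF, toAdd_ofAdd]
        have hW : ¬((⟨2 * i.1, by have := i.2; omega⟩ : Fin (2 * g)) = ⟨1, h2g1⟩) := by
          simp only [Fin.mk.injEq]; omega
        rw [if_neg hW, mul_zero, sub_zero]
        rcases eq_or_ne i (⟨0, hg0⟩ : Fin g) with h | h
        · subst h
          have hX : ((⟨2 * (0 : ℕ), by omega⟩ : Fin (2 * g)) = ⟨0, h2g0⟩) := by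
            simp only [Fin.mk.injEq]
          have hY : ((⟨2 * (0 : ℕ) + 1, by omega⟩ : Fin (2 * g)) = ⟨1, h2g1⟩) := by
            simp only [Fin.mk.injEq]
          rw [if_pos rfl]
          simp only [Fin.mk.injEq]
          norm_num
        · have hi : i.1 ≠ 0 := by
            intro hh; exact h (Fin.ext hh)
          have hX : ¬((⟨2 * i.1, by have := i.2; omega⟩ : Fin (2 * g)) = ⟨0, h2g0⟩) := by
            simp only [Fin.mk.injEq]; omega
          rw [if_neg hX, if_neg h, zero_mul, zpow_zero]
      rw [Finset.prod_congr rfl fun i _ => hval i]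
      rw [Finset.prod_ite_eq' Finset.univ (⟨0, hg0⟩ : Fin g) fun _ => lam]
      simp
    · intro a ha y
      rw [List.mem_ofFn] at ha
      obtain ⟨i, rfl⟩ := ha
      rw [snd_comm, hβdef]
      have h1 : M0 ⁅P ⟨2 * i.1, by have := i.2; omega⟩, P ⟨2 * i.1 + 1, by have := i.2; omega⟩⁆
          = 1 := by
        rw [map_commutatorElement]
        exact commutatorElement_eq_one_iff_commute.mpr (Commute.all _ _)
      rw [h1]
      simp
  -- the twisted cocycle `τ` is trivial on the relator, so it lifts to the quotient
  have hτr : sect hτ P (surfaceRel g) = 1 := by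
    refine CExt.ext ?_ ?_
    · apply Units.ext
      have h := fst_sect_mul_conj hσ hβ_mult hτ (fun x y => by rw [hτeq]) P (surfaceRel g)
      rw [CExt.fst_one, Units.val_one, h, hβr, ← hlam, mul_comm]
      exact conj_mul_eq_one hlam_abs
    · rw [CExt.snd_one, snd_sect, hP, lift_of_eq_mk, mk_surfaceRel]
  have hker : Subgroup.normalClosure ({surfaceRel g} : Set (FreeGroup (Fin (2 * g))))
      ≤ (sect hτ P).ker := by
    apply Subgroup.normalClosure_le_normal
    intro x hx
    rw [Set.mem_singleton_iff] at hx
    subst hx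
    exact MonoidHom.mem_ker.mpr hτr
  set ψ : SurfaceGroup g →* CExt τ hτ :=
    QuotientGroup.lift (Subgroup.normalClosure ({surfaceRel g} : Set (FreeGroup (Fin (2 * g)))))
      (sect hτ P) (fun x hx => MonoidHom.mem_ker.mp (hker hx)) with hψ
  have hψ_mk : ∀ w : FreeGroup (Fin (2 * g)),
      ψ (PresentedGroup.mk {surfaceRel g} w) = sect hτ P w := fun w => rfl
  have hψ_snd : ∀ x, (ψ x).snd = x := by
    intro x
    obtain ⟨w, rfl⟩ := PresentedGroup.mk_surjective {surfaceRel g} x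
    rw [hψ_mk, snd_sect, hP, lift_of_eq_mk]
  set t : SurfaceGroup g → ℂ := fun x => ((ψ x).fst : ℂ) with ht
  have htap : ∀ x, t x = ((ψ x).fst : ℂ) := by intro x; rw [ht]
  have ht_mul : ∀ x y, t (x * y) = t x * t y * τ x y := by
    intro x y
    have h := congrArg (fun z : CExt τ hτ => ((CExt.fst z : ℂˣ) : ℂ)) (map_mul ψ x y)
    simp only [CExt.fst_mul, Units.val_mul, Units.val_mk0, hψ_snd] at h
    rw [htap, htap, htap, h]
  have ht_abs : ∀ x, ‖t x‖ = 1 := by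
    intro x
    obtain ⟨w, rfl⟩ := PresentedGroup.mk_surjective {surfaceRel g} x
    rw [htap, hψ_mk]
    exact abs_fst_sect hτ P w
  have key : ∀ x y, σ x y = conj (t x) * conj (t y) * t (x * y) *
      σ'' (Abelianization.of x) (Abelianization.of y) := by
    intro x y
    rw [hβap, ht_mul x y, hτap]
    have h1 := conj_mul_eq_one (ht_abs x)
    have h2 := conj_mul_eq_one (ht_abs y)
    have h3 := conj_mul_eq_one (hβ_mult.1 x y)
    calc σ x y = (conj (t x) * t x) * (conj (t y) * t y) * σ x y *
          (conj (β x y) * β x y) := by rw [h1, h2, h3]; ring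
      _ = conj (t x) * conj (t y) * (t x * t y * (σ x y * conj (β x y))) * β x y := by ring
  constructor
  · refine ⟨σ'', fun x => conj (t x), hσ''_mult, ?_, ?_⟩
    · intro x
      rw [Complex.norm_conj]
      exact ht_abs x
    · intro x y
      rw [Complex.conj_conj]
      exact key x y
  · intro hAσ
    have hlam_alg : IsAlgebraic ℚ lam := by
      rw [hlam]
      exact alg_fst_sect hσ hAσ P (surfaceRel g)
    have hσ''_alg : ∀ q q', IsAlgebraic ℚ (σ'' q q') := by
      intro q q'
      rw [hσ''ap]
      exact alg_zpow hlam_alg _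
    have hτ_alg : ∀ x y, IsAlgebraic ℚ (τ x y) := by
      intro x y
      rw [hτap]
      exact alg_mul (hAσ x y) (alg_conj (by rw [← hβap]; exact hσ''_alg _ _))
    have ht_alg : ∀ x, IsAlgebraic ℚ (t x) := by
      intro x
      obtain ⟨w, rfl⟩ := PresentedGroup.mk_surjective {surfaceRel g} x
      rw [htap, hψ_mk]
      exact alg_fst_sect hτ hτ_alg P w
    refine ⟨σ'', fun x => conj (t x), hσ''_mult, hσ''_alg, ?_, ?_⟩
    · intro x
      refine ⟨?_, alg_conj (ht_alg x)⟩
      rw [Complex.norm_conj]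
      exact ht_abs x
    · intro x y
      rw [Complex.conj_conj]
      exact key x y
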